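/- Let C ∈ C^{N×N} be Hermitian positive definite, t ∈ C^N, and let V⁽²⁾ ∈ C^{N×m} have orthonormal columns. Suppose D = C^{1/2} diag(t) V⁽²⁾ has full column rank with QR decomposition D = QR (Q^H Q = I, R invertible). Set θ = V⁽²⁾ R^{-1} Q^H C^{1/2} t. Then θ^H diag(t)^H C t = θ^H diag(t)^H C diag(t) θ = t^H C^{1/2} Q Q^H C^{1/2} t. -/

import Mathlib

open Matrix
open scoped ComplexOrder

noncomputable def Matrix.PosSemidef.sqrt {n : Type*} [Fintype n] [DecidableEq n]
    {𝕜 : Type*} [RCLike 𝕜] {A : Matrix n n 𝕜} (hA : A.PosSemidef) : Matrix n n 𝕜 :=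
  hA.1.eigenvectorUnitary.1 * diagonal ((↑) ∘ (√·) ∘ hA.1.eigenvalues) *
    (star hA.1.eigenvectorUnitary : Matrix n n 𝕜)

theorem stmt13_sqrt_herm_aux {n : Type*} [Fintype n] [DecidableEq n]
    {𝕜 : Type*} [RCLike 𝕜] {A : Matrix n n 𝕜} (hA : A.PosSemidef) :
    (hA.sqrt)ᴴ = hA.sqrt := by
  unfold Matrix.PosSemidef.sqrt
  rw [conjTranspose_mul, conjTranspose_mul, diagonal_conjTranspose, Matrix.mul_assoc]
  have hd : star ((↑) ∘ (√·) ∘ hA.1.eigenvalues : n → 𝕜) = ((↑) ∘ (√·) ∘ hA.1.eigenvalues) := by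
    funext i
    simp
  rw [hd, Matrix.star_eq_conjTranspose, conjTranspose_conjTranspose]

theorem stmt13_sqrt_mul_self_aux {n : Type*} [Fintype n] [DecidableEq n]
    {𝕜 : Type*} [RCLike 𝕜] {A : Matrix n n 𝕜} (hA : A.PosSemidef) :
    hA.sqrt * hA.sqrt = A := by
  unfold Matrix.PosSemidef.sqrt
  conv_rhs => rw [hA.1.spectral_theorem, Unitary.conjStarAlgAut_apply]
  have hU : (star hA.1.eigenvectorUnitary : Matrix n n 𝕜) * hA.1.eigenvectorUnitary.1 = 1 :=
    Unitary.coe_star_mul_self _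
  calc _ = hA.1.eigenvectorUnitary.1 * (diagonal ((↑) ∘ (√·) ∘ hA.1.eigenvalues) *
      ((star hA.1.eigenvectorUnitary : Matrix n n 𝕜) * hA.1.eigenvectorUnitary.1) *
      diagonal ((↑) ∘ (√·) ∘ hA.1.eigenvalues)) *
      (star hA.1.eigenvectorUnitary : Matrix n n 𝕜) := by simp only [Matrix.mul_assoc]
    _ = _ := by
      rw [hU, Matrix.mul_one, diagonal_mul_diagonal]
      congr 3
      ext i
      simp only [Function.comp]
      rw [← RCLike.ofReal_mul, Real.mul_self_sqrt (hA.eigenvalues_nonneg i)]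

/-- With `C` Hermitian positive definite, `V⁽²⁾` having orthonormal
columns, `D = C^{1/2} diag(t) V⁽²⁾` of full column rank with QR decomposition
`D = Q R`, and `θ = V⁽²⁾ R⁻¹ Qᴴ C^{1/2} t`, both the cross term
`θᴴ diag(t)ᴴ C t` and the quadratic term `θᴴ diag(t)ᴴ C diag(t) θ` equal
`tᴴ C^{1/2} Q Qᴴ C^{1/2} t`. -/
theorem stmt13 (N m : ℕ) (C : Matrix (Fin N) (Fin N) ℂ) (hC : C.PosDef)
    (t : Fin N → ℂ)
    (V2 : Matrix (Fin N) (Fin m) ℂ) (hV2 : V2ᴴ * V2 = 1)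
    (D Q : Matrix (Fin N) (Fin m) ℂ) (R : Matrix (Fin m) (Fin m) ℂ)
    (hD : D = hC.posSemidef.sqrt * Matrix.diagonal t * V2)
    (hrank : D.rank = m)
    (hQ : Qᴴ * Q = 1) (hR : IsUnit R) (hRtri : R.BlockTriangular id)
    (hQR : D = Q * R)
    (θ : Fin N → ℂ)
    (hθ : θ = V2.mulVec (R⁻¹.mulVec (Qᴴ.mulVec (hC.posSemidef.sqrt.mulVec t)))) :
    star ((Matrix.diagonal t).mulVec θ) ⬝ᵥ C.mulVec t
        = star (Qᴴ.mulVec (hC.posSemidef.sqrt.mulVec t)) ⬝ᵥ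
            Qᴴ.mulVec (hC.posSemidef.sqrt.mulVec t) ∧
    star ((Matrix.diagonal t).mulVec θ) ⬝ᵥ C.mulVec ((Matrix.diagonal t).mulVec θ)
        = star (Qᴴ.mulVec (hC.posSemidef.sqrt.mulVec t)) ⬝ᵥ
            Qᴴ.mulVec (hC.posSemidef.sqrt.mulVec t) := by
  set S := hC.posSemidef.sqrt with hSdef
  have hS : Sᴴ = S := stmt13_sqrt_herm_aux hC.posSemidef
  have hSS : S * S = C := stmt13_sqrt_mul_self_aux hC.posSemidef
  set u := S.mulVec t with hu
  set y := Qᴴ.mulVec u with hy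
  -- key: S (diag t θ) = Q Qᴴ u
  have key : S.mulVec ((Matrix.diagonal t).mulVec θ) = Q.mulVec y := by
    have hRR : R * R⁻¹ = 1 :=
      Matrix.mul_nonsing_inv R ((Matrix.isUnit_iff_isUnit_det R).mp hR)
    rw [hθ, mulVec_mulVec, mulVec_mulVec, mulVec_mulVec, ← hD, hQR,
      Matrix.mul_assoc Q R R⁻¹, hRR, Matrix.mul_one]
  -- general inner product manipulation
  have dot : ∀ (a : Fin N → ℂ) (b : Fin N → ℂ),
      star a ⬝ᵥ C.mulVec b = star (S.mulVec a) ⬝ᵥ S.mulVec b := by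
    intro a b
    rw [star_mulVec, dotProduct_mulVec, dotProduct_mulVec, vecMul_vecMul, hS, hSS]
  have hQy : ∀ v : Fin N → ℂ, star (Q.mulVec y) ⬝ᵥ v = star y ⬝ᵥ Qᴴ.mulVec v := by
    intro v
    rw [star_mulVec, ← dotProduct_mulVec]
  constructor
  · rw [dot, key, hQy]
  · rw [dot, key, hQy, mulVec_mulVec, hQ, one_mulVec]
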